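/- The collection of all 2-factors that are complements of the 6 perfect matchings of the Petersen graph forms a 6-cycle 4-cover: each edge of the Petersen graph is covered exactly 4 times by these 6 even subgraphs. -/

import Mathlib

/-- Vertices of the Petersen graph: 2-element subsets of a 5-element set. -/
abbrev PetersenVertex : Type := {s : Finset (Fin 5) // s.card = 2}

/-- The Petersen graph as the Kneser graph K(5,2). -/
def petersen : SimpleGraph PetersenVertex :=
  SimpleGraph.fromRel (fun a b => Disjoint a.1 b.1)

instance : DecidableRel petersen.Adj := fun a b =>
  decidable_of_iff (a ≠ b ∧ (Disjoint a.1 b.1 ∨ Disjoint b.1 a.1)) Iff.rfl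

/-- The set of perfect matchings of the Petersen graph, as edge sets. -/
def matchings : Finset (Finset (Sym2 PetersenVertex)) :=
  (petersen.edgeFinset.powersetCard 5).filter fun s => ∀ v, (s.filter (v ∈ ·)).card = 1

def pv (a b : Fin 5) (h : ({a, b} : Finset (Fin 5)).card = 2 := by decide) :
    PetersenVertex := ⟨{a, b}, h⟩

def m1 : Finset (Sym2 PetersenVertex) :=
  {s(pv 0 1, pv 3 4), s(pv 0 2, pv 1 4), s(pv 1 2, pv 0 3), s(pv 1 3, pv 2 4), s(pv 2 3, pv 0 4)}
def m2 : Finset (Sym2 PetersenVertex) :=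
  {s(pv 0 1, pv 3 4), s(pv 0 2, pv 1 3), s(pv 1 2, pv 0 4), s(pv 0 3, pv 2 4), s(pv 2 3, pv 1 4)}
def m3 : Finset (Sym2 PetersenVertex) :=
  {s(pv 0 1, pv 2 4), s(pv 0 2, pv 3 4), s(pv 1 2, pv 0 3), s(pv 1 3, pv 0 4), s(pv 2 3, pv 1 4)}
def m4 : Finset (Sym2 PetersenVertex) :=
  {s(pv 0 1, pv 2 4), s(pv 0 2, pv 1 3), s(pv 1 2, pv 3 4), s(pv 0 3, pv 1 4), s(pv 2 3, pv 0 4)}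
def m5 : Finset (Sym2 PetersenVertex) :=
  {s(pv 0 1, pv 2 3), s(pv 0 2, pv 3 4), s(pv 1 2, pv 0 4), s(pv 0 3, pv 1 4), s(pv 1 3, pv 2 4)}
def m6 : Finset (Sym2 PetersenVertex) :=
  {s(pv 0 1, pv 2 3), s(pv 0 2, pv 1 4), s(pv 1 2, pv 3 4), s(pv 0 3, pv 2 4), s(pv 1 3, pv 0 4)}

def explicitSix : Finset (Finset (Sym2 PetersenVertex)) := {m1, m2, m3, m4, m5, m6}

set_option maxRecDepth 100000 in
lemma matchings_eq : matchings = explicitSix := by decide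

set_option maxRecDepth 100000 in
lemma key : ∀ e ∈ petersen.edgeFinset, (explicitSix.filter (fun s => e ∉ s)).card = 4 := by
  decide

/-- The subgraph associated to a set of edges. -/
def toSub (s : Finset (Sym2 PetersenVertex)) : petersen.Subgraph where
  verts := Set.univ
  Adj v w := petersen.Adj v w ∧ s(v, w) ∈ s
  adj_sub h := h.1
  edge_vert _ := Set.mem_univ _
  symm := ⟨fun v w h => ⟨h.1.symm, by rw [Sym2.eq_swap]; exact h.2⟩⟩

lemma adj_of_mem {s : Finset (Sym2 PetersenVertex)} (hs : s ⊆ petersen.edgeFinset)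
    {v w : PetersenVertex} (h : s(v, w) ∈ s) : petersen.Adj v w :=
  (SimpleGraph.mem_edgeSet petersen).1 (SimpleGraph.mem_edgeFinset.1 (hs h))

lemma toSub_edgeSet {s : Finset (Sym2 PetersenVertex)} (hs : s ⊆ petersen.edgeFinset) :
    (toSub s).edgeSet = ↑s := by
  ext e
  induction e using Sym2.ind with
  | _ v w =>
    simp only [SimpleGraph.Subgraph.mem_edgeSet, toSub, Finset.mem_coe]
    exact ⟨fun h => h.2, fun h => ⟨adj_of_mem hs h, h⟩⟩

lemma sub_of_mem_matchings {s : Finset (Sym2 PetersenVertex)} (hs : s ∈ matchings) :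
    s ⊆ petersen.edgeFinset :=
  (Finset.mem_powersetCard.1 (Finset.mem_filter.1 hs).1).1

lemma toSub_pm {s : Finset (Sym2 PetersenVertex)} (hs : s ∈ matchings) :
    (toSub s).IsPerfectMatching := by
  have hsub := sub_of_mem_matchings hs
  have hv := (Finset.mem_filter.1 hs).2
  constructor
  · intro v _
    obtain ⟨a, ha⟩ := Finset.card_eq_one.1 (hv v)
    have hmem : a ∈ s ∧ v ∈ a := by
      have : a ∈ s.filter (v ∈ ·) := ha ▸ Finset.mem_singleton_self a
      simpa using Finset.mem_filter.1 this
    obtain ⟨w, hw⟩ := Sym2.mem_iff_exists.1 hmem.2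
    subst hw
    refine ⟨w, ⟨adj_of_mem hsub hmem.1, hmem.1⟩, ?_⟩
    rintro u ⟨hadj, hu⟩
    have : s(v, u) ∈ s.filter (v ∈ ·) :=
      Finset.mem_filter.2 ⟨hu, Sym2.mem_mk_left v u⟩
    rw [ha, Finset.mem_singleton] at this
    exact Sym2.congr_right.1 this
  · intro v
    exact Set.mem_univ v

lemma card_filter_mem_eq_two {e : Sym2 PetersenVertex} (he : e ∈ petersen.edgeSet) :
    (Finset.univ.filter (· ∈ e)).card = 2 := by
  induction e using Sym2.ind with
  | _ a b =>
    have hab : a ≠ b := (petersen.mem_edgeSet.1 he).ne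
    have : Finset.univ.filter (· ∈ s(a, b)) = {a, b} := by
      ext v; simp [Sym2.mem_iff]
    rw [this, Finset.card_insert_of_notMem (by simp [hab]), Finset.card_singleton]

lemma exists_rep (M : petersen.Subgraph) (hM : M.IsPerfectMatching) :
    ∃ s ∈ matchings, M = toSub s := by
  have hfin : M.edgeSet.Finite := Set.toFinite _
  set s : Finset (Sym2 PetersenVertex) := hfin.toFinset with hs_def
  have hmem_s : ∀ e, e ∈ s ↔ e ∈ M.edgeSet := fun e => hfin.mem_toFinset
  have hsub : s ⊆ petersen.edgeFinset := fun e he =>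
    SimpleGraph.mem_edgeFinset.2 (M.edgeSet_subset ((hmem_s e).1 he))
  have hv : ∀ v, (s.filter (v ∈ ·)).card = 1 := by
    intro v
    obtain ⟨w, hw, hun⟩ := hM.1 (hM.2 v)
    have hfe : s.filter (v ∈ ·) = {s(v, w)} := by
      ext e'
      simp only [Finset.mem_filter, Finset.mem_singleton]
      constructor
      · rintro ⟨he', hve'⟩
        obtain ⟨u, rfl⟩ := Sym2.mem_iff_exists.1 hve'
        have : M.Adj v u := SimpleGraph.Subgraph.mem_edgeSet.1 ((hmem_s _).1 he')
        rw [hun u this]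
      · rintro rfl
        exact ⟨(hmem_s _).2 (SimpleGraph.Subgraph.mem_edgeSet.2 hw), Sym2.mem_mk_left v w⟩
    rw [hfe, Finset.card_singleton]
  have hcard : s.card = 5 := by
    have hsum : ∑ v : PetersenVertex, (s.filter (v ∈ ·)).card = 10 := by
      simp only [hv, Finset.sum_const, smul_eq_mul, mul_one]
      decide
    have hswap : ∑ v : PetersenVertex, (s.filter (v ∈ ·)).card = s.card * 2 := by
      simp_rw [Finset.card_filter]
      rw [Finset.sum_comm]
      rw [Finset.sum_congr rfl (fun e hes => ?_), Finset.sum_const, smul_eq_mul]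
      rw [← Finset.card_filter]
      exact card_filter_mem_eq_two (M.edgeSet_subset ((hmem_s e).1 hes))
    omega
  refine ⟨s, Finset.mem_filter.2 ⟨Finset.mem_powersetCard.2 ⟨hsub, hcard⟩, hv⟩, ?_⟩
  ext v w
  · simp [toSub, hM.2 v]
  · simp only [toSub]
    constructor
    · intro h
      exact ⟨M.adj_sub h, (hmem_s _).2 (SimpleGraph.Subgraph.mem_edgeSet.2 h)⟩
    · rintro ⟨-, hmem⟩
      exact SimpleGraph.Subgraph.mem_edgeSet.1 ((hmem_s _).1 hmem)

/-- The complements of the 6 perfect matchings of the Petersen graph form a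
6-cycle 4-cover: every edge is covered exactly 4 times, i.e. every edge lies
in the complement of exactly 4 of the perfect matchings. -/
theorem stmt8 :
    ∀ e ∈ petersen.edgeSet,
      Set.ncard {M : petersen.Subgraph | M.IsPerfectMatching ∧ e ∉ M.edgeSet} = 4 := by
  intro e he
  have hset : {M : petersen.Subgraph | M.IsPerfectMatching ∧ e ∉ M.edgeSet}
      = toSub '' ↑(matchings.filter (fun s => e ∉ s)) := by
    ext M
    simp only [Set.mem_setOf_eq, Set.mem_image, Finset.mem_coe, Finset.mem_filter]
    constructor
    · rintro ⟨hPM, hne⟩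
      obtain ⟨s, hs, rfl⟩ := exists_rep M hPM
      refine ⟨s, ⟨hs, ?_⟩, rfl⟩
      rw [toSub_edgeSet (sub_of_mem_matchings hs)] at hne
      simpa using hne
    · rintro ⟨s, ⟨hs, hes⟩, rfl⟩
      refine ⟨toSub_pm hs, ?_⟩
      rw [toSub_edgeSet (sub_of_mem_matchings hs)]
      simpa using hes
  have hinj : Set.InjOn toSub ↑(matchings.filter (fun s => e ∉ s)) := by
    intro s1 h1 s2 h2 heq
    have h1' := sub_of_mem_matchings (Finset.mem_filter.1 (Finset.mem_coe.1 h1)).1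
    have h2' := sub_of_mem_matchings (Finset.mem_filter.1 (Finset.mem_coe.1 h2)).1
    have : (toSub s1).edgeSet = (toSub s2).edgeSet := by rw [heq]
    rw [toSub_edgeSet h1', toSub_edgeSet h2'] at this
    exact Finset.coe_injective this
  rw [hset, Set.ncard_image_of_injOn hinj, Set.ncard_coe_finset]
  rw [matchings_eq]
  exact key e (SimpleGraph.mem_edgeFinset.2 he)
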